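/- For integers a, c and N ≥ 1 with N ∤ a, and t > 0, log g_a(c/N + it) = πic·B(a/N) − πt·N·B(a/N) − ∑_{m,n≥1, n≡a mod N} (ζ^{acm}/m)·exp(−2πmnt) − ∑_{m,n≥1, n≡−a mod N} (ζ^{−acm}/m)·exp(−2πmnt), where ζ = exp(2πi/N). -/

import Mathlib

open Real

/-- The second Bernoulli polynomial at the fractional part: `B(x) = {x}² - {x} + 1/6`. -/
noncomputable def B2 (x : ℝ) : ℝ := Int.fract x ^ 2 - Int.fract x + 1 / 6

/-- The root of unity `ζ_N = exp(2πi/N)`. -/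
noncomputable def zetaN (N : ℤ) : ℂ := Complex.exp (2 * π * Complex.I / N)

/-- The branch of `log g_a(τ)` given by `πiτ·N·B(a/N)` plus the sum of principal
logarithms `log(1-qⁿ)` over `n ≡ ±a (mod N)`, where `q = exp(2πiτ)`. -/
noncomputable def logG (N a : ℤ) (τ : ℂ) : ℂ :=
  π * Complex.I * τ * N * (B2 ((a : ℝ) / N) : ℂ) +
    (∑' n : ℕ+, if (n : ℤ) ≡ a [ZMOD N] then
        Complex.log (1 - Complex.exp (2 * π * Complex.I * τ) ^ (n : ℕ)) else 0) +
    ∑' n : ℕ+, if (n : ℤ) ≡ -a [ZMOD N] then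
        Complex.log (1 - Complex.exp (2 * π * Complex.I * τ) ^ (n : ℕ)) else 0

lemma zetaN_zpow (N : ℤ) (k : ℤ) : zetaN N ^ k = Complex.exp (k * (2 * π * Complex.I / N)) := by
  rw [zetaN, Complex.exp_int_mul]

lemma zetaN_norm (N : ℤ) : ‖zetaN N‖ = 1 := by
  have : zetaN N = Complex.exp (((2 * π / N : ℝ) : ℂ) * Complex.I) := by
    rw [zetaN]; congr 1; push_cast; ring
  rw [this]
  exact Complex.norm_exp_ofReal_mul_I _

lemma zetaN_zpow_congr (N : ℤ) (hN : N ≠ 0) {k l : ℤ} (h : k ≡ l [ZMOD N]) :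
    zetaN N ^ k = zetaN N ^ l := by
  obtain ⟨j, hj⟩ := h.dvd
  have hz : zetaN N ≠ 0 := by rw [zetaN]; exact Complex.exp_ne_zero _
  have hNC : (N : ℂ) ≠ 0 := Int.cast_ne_zero.mpr hN
  have hNz : zetaN N ^ (N : ℤ) = 1 := by
    rw [zetaN_zpow]
    have h2 : (N : ℂ) * (2 * π * Complex.I / N) = 2 * π * Complex.I := by
      field_simp
    rw [h2, Complex.exp_two_pi_mul_I]
  have hl : l = k + N * j := by linarith
  rw [hl, zpow_add₀ hz, zpow_mul, hNz, one_zpow, mul_one]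

-- norm of zetaN ^ k is 1
lemma zetaN_zpow_norm (N k : ℤ) (hN : N ≠ 0) : ‖zetaN N ^ k‖ = 1 := by
  rw [norm_zpow, zetaN_norm, one_zpow]

section key
variable (N b c : ℤ) (t : ℝ)

-- the q^n computation
lemma qpow (hN : N ≠ 0) (n : ℕ) :
    Complex.exp (2 * π * Complex.I * ((c : ℂ) / N + Complex.I * t)) ^ n =
      Complex.exp (((n * c : ℤ) : ℂ) * (2 * π * Complex.I / N)) *
        Real.exp (-(2 * π * n * t)) := by
  have hNC : (N : ℂ) ≠ 0 := Int.cast_ne_zero.mpr hN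
  rw [← Complex.exp_nat_mul, Complex.ofReal_exp, ← Complex.exp_add]
  congr 1
  push_cast
  field_simp
  ring_nf
  rw [Complex.I_sq]
  ring

end key

lemma key_sum (N b c : ℤ) (hN : 1 ≤ N) (t : ℝ) (ht : 0 < t) :
    (∑' n : ℕ+, if (n : ℤ) ≡ b [ZMOD N] then
        Complex.log (1 - Complex.exp (2 * π * Complex.I * ((c : ℂ) / N + Complex.I * t)) ^ (n : ℕ)) else 0)
    = - ∑' p : ℕ+ × ℕ+, if (p.2 : ℤ) ≡ b [ZMOD N] then
        zetaN N ^ (b * c * (p.1 : ℤ)) / (p.1 : ℂ) *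
          Real.exp (-(2 * π * (p.1 : ℝ) * (p.2 : ℝ) * t)) else 0 := by
  have hN0 : N ≠ 0 := by omega
  set q : ℂ := Complex.exp (2 * π * Complex.I * ((c : ℂ) / N + Complex.I * t)) with hq
  set F : ℕ+ × ℕ+ → ℂ := fun p => if (p.2 : ℤ) ≡ b [ZMOD N] then
        zetaN N ^ (b * c * (p.1 : ℤ)) / (p.1 : ℂ) *
          Real.exp (-(2 * π * (p.1 : ℝ) * (p.2 : ℝ) * t)) else 0 with hF
  -- norm of q^n
  have hqnorm : ∀ n : ℕ, ‖q ^ n‖ = Real.exp (-(2 * π * n * t)) := by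
    intro n
    rw [hq, qpow N c t hN0 n, norm_mul]
    rw [← zetaN_zpow, zetaN_zpow_norm N _ hN0, one_mul, Complex.norm_real,
      Real.norm_eq_abs, abs_of_pos (Real.exp_pos _)]
  have hqlt : ∀ n : ℕ+, ‖q ^ (n : ℕ)‖ < 1 := by
    intro n
    rw [hqnorm]
    rw [Real.exp_lt_one_iff]
    have h1 : (0:ℝ) < (n:ℝ) := by exact_mod_cast n.pos
    have h2 : (0:ℝ) < 2 * π * (n:ℝ) * t := by have := Real.pi_pos; positivity
    linarith
  -- Step A: inner sum
  have hA : ∀ n : ℕ+, (n : ℤ) ≡ b [ZMOD N] →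
      HasSum (fun m : ℕ+ => zetaN N ^ (b * c * (m : ℤ)) / (m : ℂ) *
          Real.exp (-(2 * π * (m : ℝ) * (n : ℝ) * t)))
        (-Complex.log (1 - q ^ (n : ℕ))) := by
    intro n hn
    have h0 := Complex.hasSum_taylorSeries_neg_log (hqlt n)
    have h1 : HasSum (fun m : ℕ+ => (q ^ (n : ℕ)) ^ (m : ℕ) / ((m : ℕ) : ℂ))
        (-Complex.log (1 - q ^ (n : ℕ))) := by
      apply (Function.Injective.hasSum_iff (fun a b h => PNat.coe_injective h) ?_).mpr h0
      intro x hx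
      have : x = 0 := by
        by_contra h
        exact hx ⟨⟨x, Nat.pos_of_ne_zero h⟩, rfl⟩
      simp [this]
    convert h1 using 2 with m
    rw [← pow_mul, hq, qpow N c t hN0 (n * m)]
    have harg : ((((n : ℕ) * m : ℕ) * c : ℤ) : ℂ) * (2 * π * Complex.I / N) =
        ((((n : ℤ) * c * (m : ℤ) : ℤ)) : ℂ) * (2 * π * Complex.I / N) := by push_cast; ring
    rw [harg, ← zetaN_zpow]
    have hcong : zetaN N ^ ((n : ℤ) * c * (m : ℤ)) = zetaN N ^ (b * c * (m : ℤ)) :=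
      zetaN_zpow_congr N hN0 ((hn.mul_right c).mul_right (m : ℤ))
    rw [hcong]
    have harg2 : Real.exp (-(2 * π * ((((n : ℕ) * m : ℕ)) : ℝ) * t)) =
        Real.exp (-(2 * π * (m : ℝ) * (n : ℝ) * t)) := by
      congr 1; push_cast; ring
    rw [harg2]
    ring
  -- Step B: summability of F
  have hr1 : Real.exp (-(2 * π * t)) < 1 := by
    rw [Real.exp_lt_one_iff]
    have := Real.pi_pos
    nlinarith
  have hr0 : 0 < Real.exp (-(2 * π * t)) := Real.exp_pos _
  set r : ℝ := Real.exp (-(2 * π * t)) with hrdef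
  have hgeo : Summable (fun m : ℕ+ => r ^ (m : ℕ)) := by
    exact (summable_geometric_of_lt_one hr0.le hr1).comp_injective (fun a b h => PNat.coe_injective h)
  have hGsum : Summable (fun p : ℕ+ × ℕ+ => r⁻¹ * (r ^ ((p.1 : ℕ)) * r ^ ((p.2 : ℕ)))) :=
    ((hgeo.mul_of_nonneg hgeo (fun m => pow_nonneg hr0.le _)
      (fun m => pow_nonneg hr0.le _)).mul_left r⁻¹)
  have hFsum : Summable F := by
    apply Summable.of_norm_bounded hGsum
    intro p
    rw [hF]
    by_cases hp : (p.2 : ℤ) ≡ b [ZMOD N]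
    · simp only [if_pos hp]
      rw [norm_mul, norm_div, zetaN_zpow_norm N _ hN0, Complex.norm_real,
        Real.norm_eq_abs, abs_of_pos (Real.exp_pos _), Complex.norm_natCast]
      have hm1 : (1:ℝ) ≤ (p.1 : ℝ) := by exact_mod_cast p.1.one_le
      have hexp : Real.exp (-(2 * π * (p.1 : ℝ) * (p.2 : ℝ) * t)) = r ^ ((p.1 : ℕ) * (p.2 : ℕ)) := by
        rw [hrdef, ← Real.exp_nat_mul]
        congr 1
        push_cast
        ring
      have hb1 : 1 / (p.1 : ℝ) * Real.exp (-(2 * π * (p.1 : ℝ) * (p.2 : ℝ) * t)) ≤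
          r ^ ((p.1 : ℕ) * (p.2 : ℕ)) := by
        rw [hexp]
        have h1m : 1 / (p.1 : ℝ) ≤ 1 := by
          rw [div_le_one (by positivity)]; exact hm1
        calc 1 / (p.1 : ℝ) * r ^ ((p.1 : ℕ) * (p.2 : ℕ))
            ≤ 1 * r ^ ((p.1 : ℕ) * (p.2 : ℕ)) :=
              mul_le_mul_of_nonneg_right h1m (pow_nonneg hr0.le _)
          _ = r ^ ((p.1 : ℕ) * (p.2 : ℕ)) := one_mul _
      calc 1 / (p.1 : ℝ) * Real.exp (-(2 * π * (p.1 : ℝ) * (p.2 : ℝ) * t))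
          ≤ r ^ ((p.1 : ℕ) * (p.2 : ℕ)) := hb1
        _ ≤ r⁻¹ * (r ^ ((p.1 : ℕ)) * r ^ ((p.2 : ℕ))) := by
            have hmn : (p.1 : ℕ) + (p.2 : ℕ) ≤ (p.1 : ℕ) * (p.2 : ℕ) + 1 := by
              have h1 := p.1.pos; have h2 := p.2.pos; nlinarith
            rw [← pow_add, inv_mul_eq_div, le_div_iff₀ hr0, ← pow_succ]
            exact pow_le_pow_of_le_one hr0.le hr1.le hmn
    · simp only [if_neg hp, norm_zero]
      positivity
  -- assemble
  calc (∑' n : ℕ+, if (n : ℤ) ≡ b [ZMOD N] then Complex.log (1 - q ^ (n : ℕ)) else 0)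
      = ∑' n : ℕ+, -(∑' m : ℕ+, F (m, n)) := by
        apply tsum_congr
        intro n
        by_cases hn : (n : ℤ) ≡ b [ZMOD N]
        · rw [if_pos hn]
          have hFt : (∑' m : ℕ+, F (m, n)) = -Complex.log (1 - q ^ (n : ℕ)) := by
            rw [← (hA n hn).tsum_eq]
            exact tsum_congr fun m => by simp [hF, if_pos hn]
          rw [hFt, neg_neg]
        · rw [if_neg hn]
          have hz : ∀ m : ℕ+, F (m, n) = 0 := fun m => by simp [hF, if_neg hn]
          simp [hz]
    _ = -∑' n : ℕ+, ∑' m : ℕ+, F (m, n) := by rw [tsum_neg]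
    _ = -∑' m : ℕ+, ∑' n : ℕ+, F (m, n) := by
        rw [Summable.tsum_comm (f := fun m n : ℕ+ => F (m, n)) hFsum]
    _ = -∑' p : ℕ+ × ℕ+, F p := by rw [← Summable.tsum_prod hFsum]


/-- Expansion of `log g_a(c/N + it)` (Lemma 1, first expansion):
`log g_a(c/N+it) = πic·B(a/N) - πt·N·B(a/N)
  - ∑_{m,n≥1, n≡a (N)} (ζ^{acm}/m) e^{-2πmnt} - ∑_{m,n≥1, n≡-a (N)} (ζ^{-acm}/m) e^{-2πmnt}`. -/
theorem logG_expansion (N a c : ℤ) (hN : 1 ≤ N) (ha : ¬ (N ∣ a)) (t : ℝ) (ht : 0 < t) :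
    logG N a ((c : ℂ) / N + Complex.I * t) =
      π * Complex.I * c * (B2 ((a : ℝ) / N) : ℂ) - π * t * N * (B2 ((a : ℝ) / N) : ℂ) -
        (∑' p : ℕ+ × ℕ+, if (p.2 : ℤ) ≡ a [ZMOD N] then
            zetaN N ^ (a * c * (p.1 : ℤ)) / (p.1 : ℂ) *
              Real.exp (-(2 * π * (p.1 : ℝ) * (p.2 : ℝ) * t)) else 0) -
        ∑' p : ℕ+ × ℕ+, if (p.2 : ℤ) ≡ -a [ZMOD N] then
            zetaN N ^ (-(a * c * (p.1 : ℤ))) / (p.1 : ℂ) *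
              Real.exp (-(2 * π * (p.1 : ℝ) * (p.2 : ℝ) * t)) else 0 := by
  rw [logG]
  have hN0 : (N : ℂ) ≠ 0 := Int.cast_ne_zero.mpr (by omega)
  rw [key_sum N a c hN t ht, key_sum N (-a) c hN t ht]
  have h1 : π * Complex.I * ((c : ℂ) / N + Complex.I * t) * N * (B2 ((a : ℝ) / N) : ℂ)
      = π * Complex.I * c * (B2 ((a : ℝ) / N) : ℂ) - π * t * N * (B2 ((a : ℝ) / N) : ℂ) := by
    field_simp
    ring_nf
    rw [Complex.I_sq]
    ring
  rw [h1]
  simp only [neg_mul]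
  ring
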